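/- For any finite set A of positive real numbers, max(|A+A|, |AA|) ≥ |A|^{4/3} / (2·⌈log₂|A|⌉^{1/3}). -/

import Mathlib

open Finset Pointwise

lemma sum_fiber_card {α β : Type*} [DecidableEq β] (s : Finset α) (f : α → β) :
    ∑ x ∈ s.image f, (s.filter fun a => f a = x).card = s.card :=
  (Finset.card_eq_sum_card_fiberwise (fun a ha => Finset.mem_image_of_mem f ha)).symm

lemma sum_fiber_card_sq {α β : Type*} [DecidableEq α] [DecidableEq β] (s : Finset α) (f : α → β) :
    ∑ x ∈ s.image f, ((s.filter fun a => f a = x).card) ^ 2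
      = (((s ×ˢ s).filter fun p => f p.1 = f p.2)).card := by
  rw [Finset.card_eq_sum_card_fiberwise
    (f := fun p : α × α => f p.1) (t := s.image f) ?_]
  · refine Finset.sum_congr rfl fun x hx => ?_
    rw [Finset.filter_filter]
    have : ((s ×ˢ s).filter fun p : α × α => (f p.1 = f p.2) ∧ f p.1 = x)
        = (s.filter fun a => f a = x) ×ˢ (s.filter fun a => f a = x) := by
      ext ⟨a, b⟩
      simp only [Finset.mem_filter, Finset.mem_product]
      constructor
      · rintro ⟨⟨ha, hb⟩, h1, h2⟩; exact ⟨⟨ha, h2⟩, hb, h2 ▸ h1.symm⟩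
      · rintro ⟨⟨ha, h1⟩, hb, h2⟩; exact ⟨⟨ha, hb⟩, h1.trans h2.symm, h1⟩
    rw [this, Finset.card_product, sq]
  · rintro ⟨a, b⟩ hp
    exact Finset.mem_image_of_mem f (Finset.mem_product.mp (Finset.mem_filter.mp hp).1).1

lemma energy_lower (A : Finset ℝ) (hA : ∀ a ∈ A, 0 < a) :
    (A.card : ℝ) ^ 4 ≤ ((A * A).card : ℝ) *
      (∑ s ∈ A / A, (((A ×ˢ A).filter fun p : ℝ × ℝ => p.1 / p.2 = s).card : ℝ) ^ 2) := by
  have himg_mul : (A ×ˢ A).image (fun p : ℝ × ℝ => p.1 * p.2) = A * A :=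
    Finset.image_mul_product
  have himg_div : (A ×ˢ A).image (fun p : ℝ × ℝ => p.1 / p.2) = A / A :=
    Finset.image_div_product
  -- sum of fibers = n^2
  have hsum : ∑ x ∈ A * A, (((A ×ˢ A).filter fun p : ℝ × ℝ => p.1 * p.2 = x).card : ℝ)
      = (A.card : ℝ) ^ 2 := by
    rw [← himg_mul, ← Nat.cast_sum]
    rw [sum_fiber_card (A ×ˢ A) (fun p : ℝ × ℝ => p.1 * p.2)]
    push_cast [Finset.card_product]
    ring
  -- Cauchy-Schwarz
  have hCS := sq_sum_le_card_mul_sum_sq (s := A * A)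
    (f := fun x => (((A ×ˢ A).filter fun p : ℝ × ℝ => p.1 * p.2 = x).card : ℝ))
  rw [hsum] at hCS
  have h4 : ((A.card : ℝ) ^ 2) ^ 2 = (A.card : ℝ) ^ 4 := by ring
  rw [h4] at hCS
  have key : ∑ x ∈ A * A, (((A ×ˢ A).filter fun p : ℝ × ℝ => p.1 * p.2 = x).card) ^ 2
      = ∑ s ∈ A / A, (((A ×ˢ A).filter fun p : ℝ × ℝ => p.1 / p.2 = s).card) ^ 2 := by
    rw [← himg_mul, ← himg_div, sum_fiber_card_sq, sum_fiber_card_sq]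
    refine Finset.card_nbij' (fun z => ((z.1.1, z.2.1), (z.2.2, z.1.2)))
      (fun z => ((z.1.1, z.2.2), (z.1.2, z.2.1))) ?_ ?_ ?_ ?_
    · rintro ⟨⟨a, b⟩, ⟨c, d⟩⟩ hz
      simp only [Finset.mem_coe, Finset.mem_filter, Finset.mem_product] at hz ⊢
      obtain ⟨⟨⟨ha, hb⟩, hc, hd⟩, heq⟩ := hz
      have hb0 := (hA b hb).ne'
      have hc0 := (hA c hc).ne'
      refine ⟨⟨⟨?_, ?_⟩, ?_, ?_⟩, ?_⟩ <;> first | assumption | (field_simp; linarith)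
    · rintro ⟨⟨a, b⟩, ⟨c, d⟩⟩ hz
      simp only [Finset.mem_coe, Finset.mem_filter, Finset.mem_product] at hz ⊢
      obtain ⟨⟨⟨ha, hb⟩, hc, hd⟩, heq⟩ := hz
      have hb0 := (hA b hb).ne'
      have hd0 := (hA d hd).ne'
      field_simp at heq
      refine ⟨⟨⟨?_, ?_⟩, ?_, ?_⟩, ?_⟩ <;> first | assumption | linarith
    · rintro ⟨⟨a, b⟩, ⟨c, d⟩⟩ _; rfl
    · rintro ⟨⟨a, b⟩, ⟨c, d⟩⟩ _; rfl
  have keyR : ∑ x ∈ A * A, (((A ×ˢ A).filter fun p : ℝ × ℝ => p.1 * p.2 = x).card : ℝ) ^ 2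
      = ∑ s ∈ A / A, (((A ×ˢ A).filter fun p : ℝ × ℝ => p.1 / p.2 = s).card : ℝ) ^ 2 := by
    exact_mod_cast congrArg (Nat.cast (R := ℝ)) key
  rw [keyR] at hCS
  exact hCS

lemma geom (A : Finset ℝ) (hA : ∀ a ∈ A, 0 < a) (C C' : Finset ℝ) (hsub : C' ⊆ C)
    (nxt : ℝ → ℝ) (h2 : ∀ s ∈ C', s < nxt s)
    (h3 : ∀ s ∈ C', ∀ t ∈ C, s < t → nxt s ≤ t) :
    ∑ s ∈ C', (((A ×ˢ A).filter fun p : ℝ × ℝ => p.1 / p.2 = s).card) *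
      (((A ×ˢ A).filter fun p : ℝ × ℝ => p.1 / p.2 = nxt s).card)
      ≤ ((A + A).card) ^ 2 := by
  classical
  set P : ℝ → Finset (ℝ × ℝ) := fun s => (A ×ˢ A).filter fun p => p.1 / p.2 = s with hP
  set T : Finset (Σ _ : ℝ, (ℝ × ℝ) × (ℝ × ℝ)) :=
    C'.sigma (fun s => (P s) ×ˢ (P (nxt s))) with hT
  have hcardT : T.card = ∑ s ∈ C', (P s).card * (P (nxt s)).card := by
    rw [hT, Finset.card_sigma]
    exact Finset.sum_congr rfl fun s _ => Finset.card_product _ _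
  rw [← hcardT]
  have htarget : ((A + A) ×ˢ (A + A)).card = ((A + A).card) ^ 2 := by
    rw [Finset.card_product, sq]
  rw [← htarget]
  -- basic facts about members of P s
  have hPmem : ∀ s : ℝ, ∀ p : ℝ × ℝ, p ∈ P s →
      p.1 ∈ A ∧ p.2 ∈ A ∧ 0 < p.2 ∧ p.1 = s * p.2 := by
    intro s p hp
    rw [hP, Finset.mem_filter, Finset.mem_product] at hp
    obtain ⟨⟨h1, h2'⟩, h3'⟩ := hp
    have hpos := hA _ h2'
    exact ⟨h1, h2', hpos, by field_simp at h3'; linarith⟩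
  apply Finset.card_le_card_of_injOn
    (fun z => (z.2.1.1 + z.2.2.1, z.2.1.2 + z.2.2.2))
  · rintro ⟨s, ⟨p, q⟩⟩ hz
    rw [hT, Finset.mem_coe, Finset.mem_sigma, Finset.mem_product] at hz
    obtain ⟨hs, hp, hq⟩ := hz
    obtain ⟨hp1, hp2, -, -⟩ := hPmem _ _ hp
    obtain ⟨hq1, hq2, -, -⟩ := hPmem _ _ hq
    exact Finset.mem_product.mpr ⟨Finset.add_mem_add hp1 hq1, Finset.add_mem_add hp2 hq2⟩
  · -- injectivity
    have slope : ∀ s ∈ C', ∀ p ∈ P s, ∀ q ∈ P (nxt s),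
        0 < p.2 + q.2 ∧ s * (p.2 + q.2) < p.1 + q.1 ∧ p.1 + q.1 < nxt s * (p.2 + q.2) := by
      intro s hs p hp q hq
      obtain ⟨-, -, hp2, hpe⟩ := hPmem _ _ hp
      obtain ⟨-, -, hq2, hqe⟩ := hPmem _ _ hq
      have hlt := h2 s hs
      refine ⟨by linarith, by nlinarith, by nlinarith⟩
    rintro ⟨s, ⟨p, q⟩⟩ hz ⟨t, ⟨p', q'⟩⟩ hw heq
    simp only [Finset.mem_coe, hT, Finset.mem_sigma, Finset.mem_product] at hz hw
    obtain ⟨hs, hp, hq⟩ := hz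
    obtain ⟨ht, hp', hq'⟩ := hw
    simp only [Prod.mk.injEq] at heq
    obtain ⟨he1, he2⟩ := heq
    obtain ⟨hd1, hl1, hr1⟩ := slope s hs p hp q hq
    obtain ⟨hd2, hl2, hr2⟩ := slope t ht p' hp' q' hq'
    have hst : s = t := by
      by_contra hne
      rcases lt_or_gt_of_ne hne with h | h
      · have := h3 s hs t (hsub ht) h
        have hmul := mul_le_mul_of_nonneg_right this hd1.le
        have he2t : t * (p.2 + q.2) = t * (p'.2 + q'.2) := by rw [he2]
        linarith
      · have := h3 t ht s (hsub hs) h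
        have hmul := mul_le_mul_of_nonneg_right this hd2.le
        have he2t : s * (p.2 + q.2) = s * (p'.2 + q'.2) := by rw [he2]
        linarith
    subst hst
    obtain ⟨-, -, -, hpe⟩ := hPmem _ _ hp
    obtain ⟨-, -, hq2pos, hqe⟩ := hPmem _ _ hq
    obtain ⟨-, -, -, hpe'⟩ := hPmem _ _ hp'
    obtain ⟨-, -, -, hqe'⟩ := hPmem _ _ hq'
    have hlt := h2 s hs
    rw [hpe, hqe] at he1
    rw [hpe', hqe'] at he1
    have hq22 : q.2 = q'.2 := by
      have h5 : (nxt s - s) * q.2 = (nxt s - s) * q'.2 := by linear_combination he1 - s * he2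
      exact mul_left_cancel₀ (by linarith : nxt s - s ≠ 0) h5
    have hp22 : p.2 = p'.2 := by linarith
    have : p = p' := Prod.ext (by rw [hpe, hpe', hp22]) hp22
    have : q = q' := Prod.ext (by rw [hqe, hqe', hq22]) hq22
    subst this
    subst ‹p = p'›
    rfl

set_option maxHeartbeats 1000000 in
theorem stmt_1 (A : Finset ℝ) (hA : ∀ a ∈ A, 0 < a) (h2 : 2 ≤ A.card) :
    max ((A + A).card : ℝ) ((A * A).card : ℝ) ≥
      (A.card : ℝ) ^ ((4 : ℝ) / 3) / (2 * (Nat.clog 2 A.card : ℝ) ^ ((1 : ℝ) / 3)) := by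
  classical
  set n := A.card with hn
  set L := Nat.clog 2 n with hLdef
  have hL1 : 1 ≤ L := Nat.clog_pos one_lt_two h2
  set D : ℝ → ℕ := fun s => ((A ×ˢ A).filter fun p : ℝ × ℝ => p.1 / p.2 = s).card with hD
  set Q : Finset ℝ := A / A with hQ
  have hAne : A.Nonempty := Finset.card_pos.mp (by omega)
  -- D s ≥ 1 on Q
  have hD1 : ∀ s ∈ Q, 1 ≤ D s := by
    intro s hs
    rw [hQ, Finset.mem_div] at hs
    obtain ⟨a, ha, b, hb, hab⟩ := hs
    refine Finset.card_pos.mpr ⟨(a, b), ?_⟩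
    rw [Finset.mem_filter, Finset.mem_product]
    exact ⟨⟨ha, hb⟩, hab⟩
  -- D s ≤ n
  have hDn : ∀ s : ℝ, D s ≤ n := by
    intro s
    rw [hn, hD]
    apply Finset.card_le_card_of_injOn (fun p => p.2)
    · intro p hp
      exact (Finset.mem_product.mp (Finset.mem_filter.mp hp).1).2
    · intro p hp q hq hpq
      simp only [Finset.coe_filter, Set.mem_setOf_eq, Finset.mem_product] at hp hq
      have hp2 : (0:ℝ) < p.2 := hA _ hp.1.2
      have : p.1 = s * p.2 := by field_simp at hp; linarith [hp.2]
      have h2' : q.1 = s * q.2 := by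
        have hq2 : (0:ℝ) < q.2 := hA _ hq.1.2
        field_simp at hq; linarith [hq.2]
      have hpq' : p.2 = q.2 := hpq
      exact Prod.ext (by rw [this, h2', hpq']) hpq'
  set kfun : ℕ → ℕ := fun d => Nat.log 2 ((n - 1) / d) with hkfun
  have hk_lt : ∀ s ∈ Q, kfun (D s) < L := by
    intro s hs
    have h1 : kfun (D s) ≤ Nat.log 2 (n - 1) :=
      Nat.log_mono_right (Nat.div_le_self _ _)
    have hne : n - 1 ≠ 0 := by omega
    have hp1 : 2 ^ Nat.log 2 (n - 1) ≤ n - 1 := Nat.pow_log_le_self 2 hne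
    have hp2 : n ≤ 2 ^ L := Nat.le_pow_clog one_lt_two n
    have : 2 ^ Nat.log 2 (n - 1) < 2 ^ L := by omega
    have := (Nat.pow_lt_pow_iff_right one_lt_two).mp this
    omega
  -- two elements in the same class have comparable D
  have hratio : ∀ d1 d2 : ℕ, 1 ≤ d1 → d1 ≤ n → 1 ≤ d2 → kfun d1 = kfun d2 →
      d1 ≤ 2 * d2 := by
    intro d1 d2 hd1 hd1n hd2 hkeq
    have hup : n ≤ 2 ^ (kfun d2 + 1) * d2 := by
      have h' := Nat.lt_pow_succ_log_self one_lt_two ((n - 1) / d2)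
      rw [Nat.div_lt_iff_lt_mul (by omega : 0 < d2)] at h'
      have h'' : n - 1 < 2 ^ (kfun d2 + 1) * d2 := h'
      omega
    by_cases hq1 : (n - 1) / d1 = 0
    · have hk0 : kfun d1 = 0 := by
        have he : kfun d1 = Nat.log 2 ((n - 1) / d1) := rfl
        rw [he, hq1, Nat.log_zero_right]
      rw [hk0] at hkeq
      rw [← hkeq] at hup
      norm_num at hup
      omega
    · have hlow : 2 ^ kfun d2 ≤ (n - 1) / d1 := by
        rw [← hkeq]
        exact Nat.pow_log_le_self 2 hq1
      rw [Nat.le_div_iff_mul_le (by omega : 0 < d1)] at hlow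
      have hfin : 2 ^ kfun d2 * d1 < 2 ^ kfun d2 * (2 * d2) := by
        calc 2 ^ kfun d2 * d1 ≤ n - 1 := hlow
          _ < 2 ^ (kfun d2 + 1) * d2 := by omega
          _ = 2 ^ kfun d2 * (2 * d2) := by ring
      have := Nat.lt_of_mul_lt_mul_left hfin
      omega
  -- total energy
  set E : ℕ := ∑ s ∈ Q, (D s) ^ 2 with hE
  -- pigeonhole
  have hpart : ∑ k ∈ Finset.range L, ∑ s ∈ Q.filter (fun s => kfun (D s) = k), (D s) ^ 2 = E := by
    rw [hE]
    exact Finset.sum_fiberwise_of_maps_to (fun s hs => Finset.mem_range.mpr (hk_lt s hs)) _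
  have hpigeon : ∃ k ∈ Finset.range L, E ≤ L * ∑ s ∈ Q.filter (fun s => kfun (D s) = k), (D s) ^ 2 := by
    by_contra hcon
    push_neg at hcon
    have := Finset.sum_lt_sum_of_nonempty (s := Finset.range L)
      (f := fun k => L * ∑ s ∈ Q.filter (fun s => kfun (D s) = k), (D s) ^ 2)
      (g := fun _ => E) (Finset.nonempty_range_iff.mpr (by omega)) (fun k hk => hcon k hk)
    rw [← Finset.mul_sum, hpart] at this
    simp only [Finset.sum_const, Finset.card_range, smul_eq_mul] at this
    have : L * E < L * E := by omega
    omega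
  obtain ⟨k, hkmem, hEk⟩ := hpigeon
  set C : Finset ℝ := Q.filter (fun s => kfun (D s) = k) with hC
  have hCQ : C ⊆ Q := Finset.filter_subset _ _
  -- E ≥ n^2 > 0
  have hEn2 : n ^ 2 ≤ E := by
    have h1 : ∑ s ∈ Q, D s = n ^ 2 := by
      rw [hQ, hD, ← Finset.image_div_product, sum_fiber_card, Finset.card_product, hn, sq]
    calc n ^ 2 = ∑ s ∈ Q, D s := h1.symm
      _ ≤ ∑ s ∈ Q, (D s) ^ 2 := Finset.sum_le_sum fun s hs =>
          Nat.le_self_pow two_ne_zero _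
  have hCne : C.Nonempty := by
    rw [Finset.nonempty_iff_ne_empty]
    intro hemp
    rw [hemp] at hEk
    simp at hEk
    have : 4 ≤ n ^ 2 := by nlinarith
    omega
  -- minimum of D on C
  obtain ⟨s₀, hs₀, hmin⟩ := C.exists_min_image D hCne
  set Δ : ℕ := D s₀ with hΔ
  have hΔ1 : 1 ≤ Δ := hD1 s₀ (hCQ hs₀)
  have hbound : ∀ s ∈ C, Δ ≤ D s ∧ D s ≤ 2 * Δ := by
    intro s hs
    refine ⟨hmin s hs, ?_⟩
    have h1 := (Finset.mem_filter.mp hs).2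
    have h2' := (Finset.mem_filter.mp hs₀).2
    exact hratio (D s) Δ (hD1 s (hCQ hs)) (hDn s) hΔ1 (by rw [h1, h2'])
  set m := C.card with hm
  have hm1 : 1 ≤ m := Finset.card_pos.mpr hCne
  -- the chosen class sum
  set G : ℕ := ∑ s ∈ C, (D s) ^ 2 with hG
  have hG4 : G ≤ m * (4 * Δ ^ 2) := by
    rw [hG, hm]
    calc ∑ s ∈ C, (D s) ^ 2 ≤ ∑ s ∈ C, (2 * Δ) ^ 2 :=
        Finset.sum_le_sum fun s hs => Nat.pow_le_pow_left (hbound s hs).2 2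
      _ = C.card * (4 * Δ ^ 2) := by rw [Finset.sum_const, smul_eq_mul]; ring
  -- geometric bound
  have hgeomG : G ≤ 8 * (A + A).card ^ 2 := by
    by_cases hm2 : 2 ≤ m
    · -- consecutive structure
      set Cmax := C.max' hCne with hCmax
      set C' := C.erase Cmax with hC'
      set nxt : ℝ → ℝ := fun s =>
        if h : (C.filter (fun t => s < t)).Nonempty then (C.filter (fun t => s < t)).min' h
        else 0 with hnxt
      have hfne : ∀ s ∈ C', (C.filter (fun t => s < t)).Nonempty := by
        intro s hs
        refine ⟨Cmax, Finset.mem_filter.mpr ⟨C.max'_mem hCne, ?_⟩⟩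
        have hsC := Finset.mem_of_mem_erase hs
        have hne := Finset.ne_of_mem_erase hs
        exact lt_of_le_of_ne (C.le_max' s hsC) hne
      have hnxt_lt : ∀ s ∈ C', s < nxt s := by
        intro s hs
        simp only [hnxt]; rw [dif_pos (hfne s hs)]
        exact (Finset.mem_filter.mp ((C.filter (fun t => s < t)).min'_mem (hfne s hs))).2
      have hnxt_mem : ∀ s ∈ C', nxt s ∈ C := by
        intro s hs
        simp only [hnxt]; rw [dif_pos (hfne s hs)]
        exact Finset.mem_of_mem_filter _ ((C.filter (fun t => s < t)).min'_mem (hfne s hs))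
      have hnxt_min : ∀ s ∈ C', ∀ t ∈ C, s < t → nxt s ≤ t := by
        intro s hs t ht hst
        simp only [hnxt]; rw [dif_pos (hfne s hs)]
        exact Finset.min'_le _ t (Finset.mem_filter.mpr ⟨ht, hst⟩)
      have hgeom := geom A hA C C' (Finset.erase_subset _ _) nxt hnxt_lt hnxt_min
      have hlow : (m - 1) * Δ ^ 2 ≤ ∑ s ∈ C', (D s) * (D (nxt s)) := by
        have hcard' : C'.card = m - 1 := by
          rw [hC', Finset.card_erase_of_mem (C.max'_mem hCne), hm]
        calc (m - 1) * Δ ^ 2 = ∑ _s ∈ C', Δ * Δ := by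
              rw [Finset.sum_const, smul_eq_mul, hcard', sq]
          _ ≤ ∑ s ∈ C', (D s) * (D (nxt s)) := Finset.sum_le_sum fun s hs =>
              Nat.mul_le_mul ((hbound s (Finset.mem_of_mem_erase hs)).1)
                ((hbound (nxt s) (hnxt_mem s hs)).1)
      have h8 : m * (4 * Δ ^ 2) ≤ 8 * ((m - 1) * Δ ^ 2) := by
        have : m ≤ 2 * (m - 1) := by omega
        nlinarith
      calc G ≤ m * (4 * Δ ^ 2) := hG4
        _ ≤ 8 * ((m - 1) * Δ ^ 2) := h8
        _ ≤ 8 * ∑ s ∈ C', (D s) * (D (nxt s)) := by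
            exact Nat.mul_le_mul_left 8 hlow
        _ ≤ 8 * (A + A).card ^ 2 := Nat.mul_le_mul_left 8 hgeom
    · -- m = 1
      have hm1' : m = 1 := by omega
      obtain ⟨s, hsC⟩ := Finset.card_eq_one.mp (by rw [← hm]; exact hm1')
      have hnAA : n ≤ (A + A).card := by
        rw [hn]
        exact Finset.card_le_card_add_left hAne
      have : G = (D s) ^ 2 := by rw [hG, hsC, Finset.sum_singleton]
      rw [this]
      calc (D s) ^ 2 ≤ n ^ 2 := Nat.pow_le_pow_left (hDn s) 2
        _ ≤ (A + A).card ^ 2 := Nat.pow_le_pow_left hnAA 2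
        _ ≤ 8 * (A + A).card ^ 2 := by omega
  -- combine: E ≤ 8 L |A+A|^2
  have hEbound : E ≤ 8 * L * (A + A).card ^ 2 := by
    calc E ≤ L * G := hEk
      _ ≤ L * (8 * (A + A).card ^ 2) := Nat.mul_le_mul_left L hgeomG
      _ = 8 * L * (A + A).card ^ 2 := by ring
  -- energy lower bound, in ℝ
  have hlowR := energy_lower A hA
  have hER : (∑ s ∈ Q, (((A ×ˢ A).filter fun p : ℝ × ℝ => p.1 / p.2 = s).card : ℝ) ^ 2)
      = (E : ℝ) := by
    rw [hE]; push_cast; rfl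
  rw [hQ] at hER
  rw [hER] at hlowR
  -- n^4 ≤ |AA| * 8 L |A+A|^2 ≤ 8 L M^3
  set M : ℝ := max ((A + A).card : ℝ) ((A * A).card : ℝ) with hM
  have hMAA : ((A * A).card : ℝ) ≤ M := le_max_right _ _
  have hMadd : ((A + A).card : ℝ) ≤ M := le_max_left _ _
  have hM0 : 0 ≤ M := le_trans (Nat.cast_nonneg _) hMadd
  have hmain : (n : ℝ) ^ 4 ≤ 8 * L * M ^ 3 := by
    have hEcast : (E : ℝ) ≤ 8 * L * ((A + A).card : ℝ) ^ 2 := by exact_mod_cast hEbound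
    have h1 : (n : ℝ) ^ 4 ≤ ((A * A).card : ℝ) * (8 * L * ((A + A).card : ℝ) ^ 2) := by
      refine hlowR.trans ?_
      exact mul_le_mul_of_nonneg_left hEcast (Nat.cast_nonneg _)
    refine h1.trans ?_
    have hc2 : ((A + A).card : ℝ) ^ 2 ≤ M ^ 2 := by
      apply pow_le_pow_left₀ (Nat.cast_nonneg _) hMadd
    have hL0 : (0:ℝ) ≤ 8 * L := by positivity
    calc ((A * A).card : ℝ) * (8 * L * ((A + A).card : ℝ) ^ 2)
        ≤ M * (8 * L * M ^ 2) := by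
          apply mul_le_mul hMAA ?_ ?_ hM0
          · exact mul_le_mul_of_nonneg_left hc2 hL0
          · positivity
      _ = 8 * L * M ^ 3 := by ring
  -- final rpow computation
  have hn2 : (2 : ℝ) ≤ (n : ℝ) := by exact_mod_cast h2
  have hnR0 : (0 : ℝ) ≤ (n : ℝ) := by linarith
  have hLR1 : (1 : ℝ) ≤ (L : ℝ) := by exact_mod_cast hL1
  have hLR0 : (0 : ℝ) ≤ (L : ℝ) := by linarith
  set R : ℝ := (n : ℝ) ^ ((4 : ℝ) / 3) / (2 * (L : ℝ) ^ ((1 : ℝ) / 3)) with hR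
  have hR0 : 0 ≤ R := by
    rw [hR]
    positivity
  have hcube : R ^ 3 ≤ M ^ 3 := by
    have hnum : ((n : ℝ) ^ ((4 : ℝ) / 3)) ^ (3 : ℕ) = (n : ℝ) ^ 4 := by
      rw [← Real.rpow_natCast ((n : ℝ) ^ ((4:ℝ)/3)) 3, ← Real.rpow_mul hnR0,
        ← Real.rpow_natCast (n : ℝ) 4]
      norm_num
    have hden : ((L : ℝ) ^ ((1 : ℝ) / 3)) ^ (3 : ℕ) = (L : ℝ) := by
      rw [← Real.rpow_natCast ((L : ℝ) ^ ((1:ℝ)/3)) 3, ← Real.rpow_mul hLR0]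
      norm_num
    have hLpos : (0:ℝ) < (L:ℝ) := by linarith
    rw [hR, div_pow, mul_pow, hnum, hden]
    rw [div_le_iff₀ (by positivity)]
    calc (n:ℝ) ^ 4 ≤ 8 * L * M ^ 3 := hmain
      _ = M ^ 3 * (2 ^ 3 * L) := by ring
  have := (pow_le_pow_iff_left₀ hR0 hM0 (by norm_num : (3:ℕ) ≠ 0)).mp hcube
  rw [ge_iff_le]
  exact this
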